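/- Let f : ℍ^{N×S} → ℝ be ℝ-differentiable at Q. Then for every direction matrix H ∈ ℍ^{N×S}, the real Fréchet derivative of f at Q applied to H satisfies Df(Q)[H] = 4 · Re( Σ_{n,s} (∂f/∂q_{ns})(Q) · H_{ns} ) = 4 · Re( Σ_{n,s} ((∂f/∂q_{ns}^{*})(Q))^{*} · H_{ns} ). -/

import Mathlib

open scoped Quaternion

noncomputable section

/-- The imaginary unit `i` of the quaternions. -/
def qI : ℍ[ℝ] := ⟨0, 1, 0, 0⟩
/-- The imaginary unit `j` of the quaternions. -/
def qJ : ℍ[ℝ] := ⟨0, 0, 1, 0⟩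
/-- The imaginary unit `k` of the quaternions. -/
def qK : ℍ[ℝ] := ⟨0, 0, 0, 1⟩

/-- The `N × S` quaternion matrix with entry `d` at position `(n,s)` and `0` elsewhere. -/
def single {N S : ℕ} (n : Fin N) (s : Fin S) (d : ℍ[ℝ]) : Fin N → Fin S → ℍ[ℝ] :=
  Pi.single n (Pi.single s d)

/-- Real directional (Fréchet) derivative of a real-valued function of a matrix variable, in
the direction `d` at the single entry `(n,s)` (the other entries held fixed). -/
def pdR {N S : ℕ} (f : (Fin N → Fin S → ℍ[ℝ]) → ℝ) (Q : Fin N → Fin S → ℍ[ℝ])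
    (n : Fin N) (s : Fin S) (d : ℍ[ℝ]) : ℝ :=
  fderiv ℝ f Q (single n s d)

/-- Left GHR derivative `∂f/∂q_{ns}^ν` of a real-valued function `f` with respect to the entry
`q_{ns}`: `¼(∂f/∂q_a − (∂f/∂q_b) i^ν − (∂f/∂q_c) j^ν − (∂f/∂q_d) k^ν)`, `x^ν = ν x ν⁻¹`. -/
def ghrER {N S : ℕ} (ν : ℍ[ℝ]) (f : (Fin N → Fin S → ℍ[ℝ]) → ℝ)
    (Q : Fin N → Fin S → ℍ[ℝ]) (n : Fin N) (s : Fin S) : ℍ[ℝ] :=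
  (1 / 4 : ℝ) • ((pdR f Q n s 1) • (1 : ℍ[ℝ]) - (pdR f Q n s qI) • (ν * qI * ν⁻¹)
    - (pdR f Q n s qJ) • (ν * qJ * ν⁻¹) - (pdR f Q n s qK) • (ν * qK * ν⁻¹))

/-- Conjugate left GHR derivative `∂f/∂q_{ns}^{ν*}` of a real-valued function `f`. -/
def ghrStarER {N S : ℕ} (ν : ℍ[ℝ]) (f : (Fin N → Fin S → ℍ[ℝ]) → ℝ)
    (Q : Fin N → Fin S → ℍ[ℝ]) (n : Fin N) (s : Fin S) : ℍ[ℝ] :=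
  (1 / 4 : ℝ) • ((pdR f Q n s 1) • (1 : ℍ[ℝ]) + (pdR f Q n s qI) • (ν * qI * ν⁻¹)
    + (pdR f Q n s qJ) • (ν * qJ * ν⁻¹) + (pdR f Q n s qK) • (ν * qK * ν⁻¹))



lemma single_decomp {N S : ℕ} (n : Fin N) (s : Fin S) (d : ℍ[ℝ]) :
    single n s d = d.re • single n s 1 + d.imI • single n s qI
      + d.imJ • single n s qJ + d.imK • single n s qK := by
  have hd : d = d.re • (1:ℍ[ℝ]) + d.imI • qI + d.imJ • qJ + d.imK • qK := by
    ext <;> simp <;> simp [qI, qJ, qK]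
  conv_lhs => rw [hd]
  simp only [single, Pi.single_add, Pi.single_smul]

lemma ghr_key {N S : ℕ} (f : (Fin N → Fin S → ℍ[ℝ]) → ℝ) (Q : Fin N → Fin S → ℍ[ℝ])
    (n : Fin N) (s : Fin S) (h : ℍ[ℝ]) :
    fderiv ℝ f Q (single n s h)
      = 4 * (ghrER (1 : ℍ[ℝ]) f Q n s * h).re := by
  rw [single_decomp]
  simp only [map_add, map_smul, smul_eq_mul]
  simp only [ghrER, one_mul, inv_one, mul_one]
  simp [Quaternion.re_mul, pdR]
  simp [qI, qJ, qK]
  ring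

lemma ghr_star_key {N S : ℕ} (f : (Fin N → Fin S → ℍ[ℝ]) → ℝ) (Q : Fin N → Fin S → ℍ[ℝ])
    (n : Fin N) (s : Fin S) :
    star (ghrStarER (1 : ℍ[ℝ]) f Q n s) = ghrER (1 : ℍ[ℝ]) f Q n s := by
  simp only [ghrStarER, ghrER, one_mul, inv_one, mul_one]
  ext <;> simp [Quaternion.star_smul] <;> simp [qI, qJ, qK]

/-- **The differential of a real-valued function via GHR derivatives** (basis of Theorem 4):
for `f : ℍ^{N×S} → ℝ` differentiable at `Q` and any direction `H`,
`Df(Q)[H] = 4 Re(Σ_{n,s} (∂f/∂q_{ns}) H_{ns}) = 4 Re(Σ_{n,s} (∂f/∂q_{ns}^*)^* H_{ns})`. -/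
theorem fderiv_eq_ghr_re_sum {N S : ℕ}
    (f : (Fin N → Fin S → ℍ[ℝ]) → ℝ) (Q : Fin N → Fin S → ℍ[ℝ])
    (hf : DifferentiableAt ℝ f Q) :
    ∀ H : Fin N → Fin S → ℍ[ℝ],
      fderiv ℝ f Q H = 4 * (∑ n, ∑ s, ghrER (1 : ℍ[ℝ]) f Q n s * H n s).re
      ∧ fderiv ℝ f Q H = 4 * (∑ n, ∑ s, star (ghrStarER (1 : ℍ[ℝ]) f Q n s) * H n s).re := by
  intro H
  have h1 : fderiv ℝ f Q H = 4 * (∑ n, ∑ s, ghrER (1 : ℍ[ℝ]) f Q n s * H n s).re := by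
    have hH : H = ∑ n, ∑ s, single n s (H n s) := by
      funext m t
      simp [single, Finset.sum_apply, Pi.single_apply,
        apply_ite (fun g : Fin S → ℍ[ℝ] => g t), eq_comm]
    conv_lhs => rw [hH]
    rw [map_sum]
    simp only [map_sum, ghr_key]
    have hre : ∀ {α : Type} (t : Finset α) (g : α → ℍ[ℝ]),
        (∑ x ∈ t, g x).re = ∑ x ∈ t, (g x).re :=
      fun t g => map_sum (QuaternionAlgebra.reₗ (-1 : ℝ) 0 (-1)) g t
    rw [hre, Finset.mul_sum]
    refine Finset.sum_congr rfl fun n _ => ?_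
    rw [hre, Finset.mul_sum]
  refine ⟨h1, ?_⟩
  simp only [ghr_star_key, h1]
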